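/- Every ultrafilter in an inverse ∧-semigroup with zero is a tight filter. -/

import Mathlib

/-- An inverse semigroup with zero whose natural partial order has binary meets
(an inverse ∧-semigroup with zero). The order `≤` is required to coincide with
the natural partial order: `a ≤ b ↔ a = b * (a⁻¹ * a)`. -/
class InverseMeetSemigroup (S : Type*) extends Semigroup S, Zero S, Inv S, SemilatticeInf S where
  mul_inv_mul : ∀ a : S, a * a⁻¹ * a = a
  inv_mul_inv : ∀ a : S, a⁻¹ * a * a⁻¹ = a⁻¹
  idem_comm : ∀ e f : S, e * e = e → f * f = f → e * f = f * e
  zero_mul : ∀ a : S, (0 : S) * a = 0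
  mul_zero : ∀ a : S, a * (0 : S) = 0
  le_iff : ∀ a b : S, a ≤ b ↔ a = b * (a⁻¹ * a)

variable {S : Type*} [InverseMeetSemigroup S]

/-- The Lenz arrow relation: `a → b` iff every nonzero `x ≤ a` satisfies `x ⊓ b ≠ 0`. -/
def LenzArrow (a b : S) : Prop := ∀ x : S, x ≠ 0 → x ≤ a → x ⊓ b ≠ 0

/-- A filter: a nonempty, downward directed, upward closed subset not containing `0`. -/
def IsFilt (F : Set S) : Prop :=
  F.Nonempty ∧ (0 : S) ∉ F ∧
  (∀ x ∈ F, ∀ y : S, x ≤ y → y ∈ F) ∧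
  (∀ x ∈ F, ∀ y ∈ F, ∃ z ∈ F, z ≤ x ∧ z ≤ y)

/-- An ultrafilter: a maximal filter. -/
def IsUltra (F : Set S) : Prop :=
  IsFilt F ∧ ∀ G : Set S, IsFilt G → F ⊆ G → G = F

/-- A finite subset of `a↓` is a cover of `a` if every nonzero `x ≤ a`
meets some element of it. -/
def IsCover (A : Finset S) (a : S) : Prop :=
  (∀ x ∈ A, x ≤ a) ∧ ∀ x : S, x ≠ 0 → x ≤ a → ∃ y ∈ A, x ⊓ y ≠ 0

/-- A filter is tight if it meets every finite cover of each of its elements. -/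
def IsTight (F : Set S) : Prop :=
  IsFilt F ∧ ∀ a ∈ F, ∀ A : Finset S, IsCover A a → ∃ y ∈ A, y ∈ F

lemma eq_zero_of_le_zero {w : S} (h : w ≤ (0 : S)) : w = 0 := by
  rw [InverseMeetSemigroup.le_iff] at h
  rw [h, InverseMeetSemigroup.zero_mul]

/-- If `y` meets every element of an ultrafilter, then `y` belongs to it. -/
lemma ultra_mem_of_meets (F : Set S) (hF : IsUltra F) (y : S)
    (h : ∀ x ∈ F, x ⊓ y ≠ 0) : y ∈ F := by
  obtain ⟨⟨⟨a, haF⟩, h0, hup, hdir⟩, hmax⟩ := hF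
  set G : Set S := {g | ∃ x ∈ F, x ⊓ y ≤ g} with hG
  have hFG : F ⊆ G := fun x hx => ⟨x, hx, inf_le_left⟩
  have hGfilt : IsFilt G := by
    refine ⟨⟨a, hFG haF⟩, ?_, ?_, ?_⟩
    · rintro ⟨x, hx, hle⟩
      exact h x hx (eq_zero_of_le_zero hle)
    · rintro g ⟨x, hx, hle⟩ g' hgg'
      exact ⟨x, hx, hle.trans hgg'⟩
    · rintro g ⟨x, hx, hle⟩ g' ⟨x', hx', hle'⟩
      obtain ⟨z, hz, hz1, hz2⟩ := hdir x hx x' hx'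
      refine ⟨z ⊓ y, ⟨z, hz, le_rfl⟩, ?_, ?_⟩
      · exact le_trans (inf_le_inf_right y hz1) hle
      · exact le_trans (inf_le_inf_right y hz2) hle'
  have : G = F := hmax G hGfilt hFG
  rw [← this]
  exact ⟨a, haF, inf_le_right⟩

/-- Every ultrafilter is a tight filter. -/
theorem ultra_isTight (F : Set S) (hF : IsUltra F) : IsTight F := by
  refine ⟨hF.1, ?_⟩
  intro a haF A hA
  by_contra hnone
  push_neg at hnone
  obtain ⟨⟨_, h0, hup, hdir⟩, _⟩ := id hF
  -- for each y ∈ A, there is x ∈ F with x ⊓ y = 0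
  have hsep : ∀ y ∈ A, ∃ x ∈ F, x ⊓ y = 0 := by
    intro y hy
    by_contra hc
    push_neg at hc
    exact hnone y hy (ultra_mem_of_meets F hF y hc)
  -- find z ∈ F, z ≤ a, killing all of A
  have key : ∀ B : Finset S, (∀ y ∈ B, ∃ x ∈ F, x ⊓ y = 0) →
      ∃ z ∈ F, z ≤ a ∧ ∀ y ∈ B, z ⊓ y = 0 := by
    classical
    intro B
    induction B using Finset.induction_on with
    | empty => exact fun _ => ⟨a, haF, le_rfl, by simp⟩
    | insert _ _ hnot ih =>
      rename_i b B
      intro hsep'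
      obtain ⟨z, hzF, hza, hzB⟩ := ih (fun y hy => hsep' y (Finset.mem_insert_of_mem hy))
      obtain ⟨x, hxF, hxb⟩ := hsep' b (Finset.mem_insert_self b B)
      obtain ⟨w, hwF, hw1, hw2⟩ := hdir z hzF x hxF
      refine ⟨w, hwF, hw1.trans hza, ?_⟩
      intro y hy
      rcases Finset.mem_insert.mp hy with rfl | hy'
      · exact eq_zero_of_le_zero (hxb ▸ inf_le_inf_right y hw2)
      · exact eq_zero_of_le_zero ((hzB y hy') ▸ inf_le_inf_right y hw1)
  obtain ⟨z, hzF, hza, hzA⟩ := key A hsep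
  have hz0 : z ≠ 0 := fun h => h0 (h ▸ hzF)
  obtain ⟨y, hyA, hy0⟩ := hA.2 z hz0 hza
  exact hy0 (hzA y hyA)
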